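/- Let Δ = [a,b,c] be a triangle in ℝ². The map f : Δ → Δ defined by f(x) = x if x ∈ [a,b] and f(x) = c otherwise is monotone for euclidean betweenness. -/

import Mathlib

open Classical in

/-- On a triangle Δ = [a,b,c], the map which is the identity on the
segment [a,b] and constantly c elsewhere is monotone for euclidean betweenness. -/
theorem stmt_7 (a b c : ℝ × ℝ) (habc : AffineIndependent ℝ ![a, b, c])
    (Δ : Set (ℝ × ℝ)) (hΔ : Δ = convexHull ℝ {a, b, c})
    (f : ℝ × ℝ → ℝ × ℝ) (hf : ∀ x, f x = if x ∈ segment ℝ a b then x else c) :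
    ∀ p q x, p ∈ Δ → q ∈ Δ → x ∈ Δ → x ∈ segment ℝ p q →
      f x ∈ segment ℝ (f p) (f q) := by
  -- the determinant
  set d : ℝ := (b.1 - a.1) * (c.2 - a.2) - (b.2 - a.2) * (c.1 - a.1) with hd
  have hd0 : d ≠ 0 := by
    intro h0
    have hiff := affineIndependent_iff.1 habc
    rw [hd] at h0
    have h1 := hiff Finset.univ ![c.2 - b.2, a.2 - c.2, b.2 - a.2]
      (by simp [Fin.sum_univ_three])
      (by
        simp only [Fin.sum_univ_three, Matrix.cons_val_zero, Matrix.cons_val_one,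
          Matrix.head_cons, Matrix.cons_val_two, Matrix.tail_cons]
        have e1 : (c.2 - b.2) * a.1 + (a.2 - c.2) * b.1 + (b.2 - a.2) * c.1 = 0 := by
          linear_combination -h0
        have e2 : (c.2 - b.2) * a.2 + (a.2 - c.2) * b.2 + (b.2 - a.2) * c.2 = 0 := by ring
        exact Prod.ext_iff.2 ⟨by simpa [Prod.smul_def] using e1, by simpa [Prod.smul_def] using e2⟩)
    have h2 := hiff Finset.univ ![c.1 - b.1, a.1 - c.1, b.1 - a.1]
      (by simp [Fin.sum_univ_three])
      (by
        simp only [Fin.sum_univ_three, Matrix.cons_val_zero, Matrix.cons_val_one,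
          Matrix.head_cons, Matrix.cons_val_two, Matrix.tail_cons]
        have e1 : (c.1 - b.1) * a.1 + (a.1 - c.1) * b.1 + (b.1 - a.1) * c.1 = 0 := by ring
        have e2 : (c.1 - b.1) * a.2 + (a.1 - c.1) * b.2 + (b.1 - a.1) * c.2 = 0 := by
          linear_combination h0
        exact Prod.ext_iff.2 ⟨by simpa [Prod.smul_def] using e1, by simpa [Prod.smul_def] using e2⟩)
    have hab : a = b := by
      have e1 := h1 1 (Finset.mem_univ _)
      have e2 := h2 1 (Finset.mem_univ _)
      have e3 := h1 2 (Finset.mem_univ _)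
      have e4 := h2 2 (Finset.mem_univ _)
      simp [Matrix.cons_val_one, Matrix.head_cons] at e1 e2 e3 e4
      have : a.1 = b.1 := by linarith
      have : a.2 = b.2 := by linarith
      exact Prod.ext_iff.2 ⟨‹a.1 = b.1›, ‹a.2 = b.2›⟩
    have : (0 : Fin 3) ≠ 1 := by decide
    exact this (habc.injective (by simp [hab]))
  -- the affine functional vanishing on line ab, equal 1 at c
  set φ : ℝ × ℝ → ℝ := fun y => ((b.1 - a.1) * (y.2 - a.2) - (b.2 - a.2) * (y.1 - a.1)) / d
    with hφ
  have hφa : φ a = 0 := by simp [hφ]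
  have hφb : φ b = 0 := by
    simp only [hφ]; rw [div_eq_zero_iff]; left; ring
  have hφc : φ c = 1 := by simp only [hφ]; exact div_self hd0
  have hcomb : ∀ (t s : ℝ) (u v : ℝ × ℝ), t + s = 1 →
      φ (t • u + s • v) = t * φ u + s * φ v := by
    intro t s u v hts
    have hs : s = 1 - t := by linarith
    subst hs
    simp only [hφ, Prod.smul_def, Prod.fst_add, Prod.snd_add, smul_eq_mul, Prod.smul_fst,
      Prod.smul_snd]
    field_simp
    ring
  -- segment members have φ = 0
  have hseg0 : ∀ y ∈ segment ℝ a b, φ y = 0 := by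
    rintro y ⟨t, s, ht, hs, hts, rfl⟩
    rw [hcomb t s a b hts, hφa, hφb]; ring
  -- decomposition of Δ
  have hmem : ∀ y ∈ Δ, 0 ≤ φ y ∧ (φ y = 0 → y ∈ segment ℝ a b) := by
    intro y hy
    rw [hΔ] at hy
    rw [show ({a, b, c} : Set (ℝ × ℝ)) = insert a {b, c} from rfl,
      convexHull_insert ⟨b, by simp⟩, convexHull_pair] at hy
    rw [mem_convexJoin] at hy
    obtain ⟨a', ha', z, hz, hy⟩ := hy
    rw [Set.mem_singleton_iff] at ha'
    rw [ha'] at hy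
    obtain ⟨t, s, ht, hs, hts, rfl⟩ := hy
    obtain ⟨t', s', ht', hs', hts', rfl⟩ := hz
    have hφz : φ (t' • b + s' • c) = s' := by
      rw [hcomb t' s' b c hts', hφb, hφc]; ring
    have hφy : φ (t • a + s • (t' • b + s' • c)) = s * s' := by
      rw [hcomb t s a _ hts, hφa, hφz]; ring
    rw [hφy]
    refine ⟨mul_nonneg hs hs', fun h0 => ?_⟩
    rcases mul_eq_zero.1 h0 with h | h
    · subst h
      simp only [zero_smul, add_zero]
      have : t = 1 := by linarith
      subst this
      simpa using left_mem_segment ℝ a b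
    · subst h
      have : t' = 1 := by linarith
      subst this
      simp only [one_smul, zero_smul, add_zero]
      exact ⟨t, s, ht, hs, hts, rfl⟩
  -- positivity off the segment
  have hpos : ∀ y ∈ Δ, y ∉ segment ℝ a b → 0 < φ y := by
    intro y hy hyn
    rcases (hmem y hy).1.lt_or_eq with h | h
    · exact h
    · exact absurd ((hmem y hy).2 h.symm) hyn
  intro p q x hp hq hx hx'
  by_cases hpS : p ∈ segment ℝ a b <;> by_cases hqS : q ∈ segment ℝ a b
  · -- both on [a,b]
    have hxS : x ∈ segment ℝ a b := (convex_segment a b).segment_subset hpS hqS hx'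
    simp only [hf, if_pos hxS, if_pos hpS, if_pos hqS]
    exact hx'
  · -- p on [a,b], q off
    obtain ⟨t, s, ht, hs, hts, rfl⟩ := hx'
    have hφx : φ (t • p + s • q) = s * φ q := by
      rw [hcomb t s p q hts, hseg0 p hpS]; ring
    simp only [hf, if_pos hpS, if_neg hqS]
    by_cases hxS : (t • p + s • q) ∈ segment ℝ a b
    · rw [if_pos hxS]
      have h0 : s * φ q = 0 := by rw [← hφx]; exact hseg0 _ hxS
      have hq0 : 0 < φ q := hpos q hq hqS
      have hs0 : s = 0 := by
        rcases mul_eq_zero.1 h0 with h | h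
        · exact h
        · exact absurd h hq0.ne'
      subst hs0
      have : t = 1 := by linarith
      subst this
      simpa using left_mem_segment ℝ p c
    · rw [if_neg hxS]
      exact right_mem_segment ℝ p c
  · -- q on [a,b], p off
    obtain ⟨t, s, ht, hs, hts, rfl⟩ := hx'
    have hφx : φ (t • p + s • q) = t * φ p := by
      rw [hcomb t s p q hts, hseg0 q hqS]; ring
    simp only [hf, if_neg hpS, if_pos hqS]
    by_cases hxS : (t • p + s • q) ∈ segment ℝ a b
    · rw [if_pos hxS]
      have h0 : t * φ p = 0 := by rw [← hφx]; exact hseg0 _ hxS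
      have hp0 : 0 < φ p := hpos p hp hpS
      have ht0 : t = 0 := by
        rcases mul_eq_zero.1 h0 with h | h
        · exact h
        · exact absurd h hp0.ne'
      subst ht0
      have : s = 1 := by linarith
      simp only [this, zero_smul, one_smul, zero_add]
      simpa using right_mem_segment ℝ c q
    · rw [if_neg hxS]
      exact left_mem_segment ℝ c q
  · -- both off
    obtain ⟨t, s, ht, hs, hts, rfl⟩ := hx'
    have hp0 : 0 < φ p := hpos p hp hpS
    have hq0 : 0 < φ q := hpos q hq hqS
    have hx0 : 0 < φ (t • p + s • q) := by
      rw [hcomb t s p q hts]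
      rcases ht.lt_or_eq with h | h
      · have : 0 < t * φ p := mul_pos h hp0
        nlinarith [mul_nonneg hs hq0.le]
      · have : s = 1 := by linarith
        rw [← h, this]; simpa using hq0
    have hxS : (t • p + s • q) ∉ segment ℝ a b := fun h =>
      hx0.ne' (hseg0 _ h)
    simp only [hf, if_neg hxS, if_neg hpS, if_neg hqS]
    exact left_mem_segment ℝ c c
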